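/- Let α, δ ∈ ℝ, β > 0, and let λ ≥ 0 satisfy λ = 0 if α² + 3βδ > 0 and λ > 2√(−(α² + 3βδ))/(3β) if α² + 3βδ ≤ 0. Set c₋ := (α − √(3β²λ² + α² + 3βδ))/(3β) and s(m) := √(3(m − α/(3β))² − (α² + 3βδ)/(3β²)) for m ≤ c₋. Then there exists a constant C > 0, depending only on α, β, δ, λ, such that for every measurable f : (−∞, c₋) → ℂ with ∫_{−∞}^{c₋} |f(m)|² dm < ∞, one has ∫₀^∞ |∫_{−∞}^{c₋} e^{−x·s(m)} f(m) dm|² dx ≤ C ∫_{−∞}^{c₋} |f(m)|² dm. -/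

import Mathlib

open MeasureTheory

/-- `c₋ = (α − √(3β²λ² + α² + 3βδ))/(3β)`. -/
noncomputable def cMinus (α β δ lam : ℝ) : ℝ :=
  (α - Real.sqrt (3 * β ^ 2 * lam ^ 2 + α ^ 2 + 3 * β * δ)) / (3 * β)

/-- `s(m) = √(3(m − α/(3β))² − (α² + 3βδ)/(3β²))`. -/
noncomputable def sHNLS (α β δ : ℝ) (m : ℝ) : ℝ :=
  Real.sqrt (3 * (m - α / (3 * β)) ^ 2 - (α ^ 2 + 3 * β * δ) / (3 * β ^ 2))

section Aux

open Set ENNReal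

/-- 1D change of variables for Lebesgue integrals. -/
theorem MLB.lint_cov {s : Set ℝ} {F F' : ℝ → ℝ}
    (hs : MeasurableSet s) (hF' : ∀ x ∈ s, HasDerivWithinAt F (F' x) s x)
    (hF : Set.InjOn F s) (g : ℝ → ℝ≥0∞) :
    ∫⁻ x in F '' s, g x = ∫⁻ x in s, ENNReal.ofReal |F' x| * g (F x) := by
  simpa only [ContinuousLinearMap.det_toSpanSingleton] using
    MeasureTheory.lintegral_image_eq_lintegral_abs_det_fderiv_mul volume hs
      (fun x hx => (hF' x hx).hasFDerivWithinAt) hF g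

/-- `∫₀^∞ t^{-1/2} e^{-bt} dt = √π · b^{-1/2}`. -/
theorem MLB.lint_gamma {b : ℝ} (hb : 0 < b) :
    ∫⁻ t in Set.Ioi (0:ℝ), ENNReal.ofReal (t ^ (-(1/2) : ℝ) * Real.exp (-(b*t)))
      = ENNReal.ofReal (Real.sqrt Real.pi * b ^ (-(1/2) : ℝ)) := by
  have hInt : IntegrableOn (fun t : ℝ => t ^ (-(1/2) : ℝ) * Real.exp (-(b*t))) (Set.Ioi 0) := by
    have h := integrableOn_rpow_mul_exp_neg_mul_rpow (s := (-(1/2) : ℝ)) (p := 1)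
      (by norm_num) zero_lt_one hb
    refine h.congr_fun (fun t ht => ?_) measurableSet_Ioi
    simp only [Real.rpow_one]; ring_nf
  rw [← ofReal_integral_eq_lintegral_ofReal hInt ?_]
  · have h := Real.integral_rpow_mul_exp_neg_mul_Ioi (a := (1/2 : ℝ)) (r := b) (by norm_num) hb
    have h2 : ∀ t : ℝ, t ^ ((1:ℝ)/2 - 1) = t ^ (-(1/2) : ℝ) := fun t => by norm_num
    simp_rw [h2] at h
    rw [h, Real.Gamma_one_half_eq, one_div, Real.inv_rpow hb.le, ← Real.rpow_neg hb.le,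
      mul_comm]
  · filter_upwards [ae_restrict_mem measurableSet_Ioi] with t ht
    have : (0:ℝ) < t := ht
    positivity

/-- Algebraic facts on `Iio c₋`. -/
theorem MLB.key_facts (α β δ lam : ℝ) (hβ : 0 < β)
    (hlam2 : α ^ 2 + 3 * β * δ ≤ 0 →
      2 * Real.sqrt (-(α ^ 2 + 3 * β * δ)) / (3 * β) < lam)
    {m : ℝ} (hm : m < cMinus α β δ lam) :
    lam ^ 2 < 3 * (m - α / (3 * β)) ^ 2 - (α ^ 2 + 3 * β * δ) / (3 * β ^ 2) ∧
    3 * (3 * (m - α / (3 * β)) ^ 2 - (α ^ 2 + 3 * β * δ) / (3 * β ^ 2)) ≤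
      (6 * (α / (3 * β) - m)) ^ 2 ∧
    m < α / (3 * β) := by
  have hb3 : (0:ℝ) < 3 * β := by linarith
  have hb2 : (0:ℝ) < β ^ 2 := by positivity
  set K := α ^ 2 + 3 * β * δ with hK
  have hKlam : K ≤ 0 → 4 * (-K) < 9 * β ^ 2 * lam ^ 2 := by
    intro hKneg
    have h2 := hlam2 hKneg
    have h3 : 2 * Real.sqrt (-K) < lam * (3 * β) := (div_lt_iff₀ hb3).mp h2
    have h4 : Real.sqrt (-K) ^ 2 = -K := Real.sq_sqrt (by linarith)
    have h5 : (2 * Real.sqrt (-K)) ^ 2 < (lam * (3 * β)) ^ 2 :=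
      pow_lt_pow_left₀ h3 (by positivity) two_ne_zero
    nlinarith
  have hR2 : 0 < 3 * β ^ 2 * lam ^ 2 + α ^ 2 + 3 * β * δ := by
    rcases le_or_gt K 0 with hKneg | hKpos
    · have := hKlam hKneg; nlinarith
    · nlinarith [sq_nonneg (β * lam)]
  set R := Real.sqrt (3 * β ^ 2 * lam ^ 2 + α ^ 2 + 3 * β * δ) with hR
  have hRsq : R ^ 2 = 3 * β ^ 2 * lam ^ 2 + K := by
    rw [hR, Real.sq_sqrt hR2.le, hK]; ring
  have hRpos : 0 < R := Real.sqrt_pos.mpr hR2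
  set a := α / (3 * β) with ha
  have haa : a * (3 * β) = α := div_mul_cancel₀ α hb3.ne'
  set t := K / (3 * β ^ 2) with htdef
  have ht : t * (3 * β ^ 2) = K := div_mul_cancel₀ K (by positivity)
  have h5 : R < (a - m) * (3 * β) := by
    have := (lt_div_iff₀ hb3).mp hm
    nlinarith
  have ham : m < a := by nlinarith
  have h6 : R ^ 2 < ((a - m) * (3 * β)) ^ 2 :=
    pow_lt_pow_left₀ h5 hRpos.le two_ne_zero
  refine ⟨by nlinarith, ?_, ham⟩
  rcases le_or_gt K 0 with hKneg | hKpos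
  · have := hKlam hKneg; nlinarith
  · nlinarith [sq_nonneg (a - m)]

variable {α β δ lam : ℝ} (hβ : 0 < β)
    (hlam2 : α ^ 2 + 3 * β * δ ≤ 0 →
      2 * Real.sqrt (-(α ^ 2 + 3 * β * δ)) / (3 * β) < lam)

include hβ hlam2

/-- positivity of `s` on `Iio c₋` -/
theorem MLB.S_pos {m : ℝ} (hm : m < cMinus α β δ lam) : 0 < sHNLS α β δ m := by
  have h := (MLB.key_facts α β δ lam hβ hlam2 hm).1
  have : 0 < 3 * (m - α / (3 * β)) ^ 2 - (α ^ 2 + 3 * β * δ) / (3 * β ^ 2) :=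
    lt_of_le_of_lt (sq_nonneg lam) h
  exact Real.sqrt_pos.mpr this

/-- `√3 · s(m) ≤ 6(a − m)` on `Iio c₋`. -/
theorem MLB.S_le {m : ℝ} (hm : m < cMinus α β δ lam) :
    Real.sqrt 3 * sHNLS α β δ m ≤ 6 * (α / (3 * β) - m) := by
  obtain ⟨h1, h2, h3⟩ := MLB.key_facts α β δ lam hβ hlam2 hm
  have e1 : Real.sqrt 3 * sHNLS α β δ m
      = Real.sqrt (3 * (3 * (m - α / (3 * β)) ^ 2 - (α ^ 2 + 3 * β * δ) / (3 * β ^ 2))) := by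
    rw [sHNLS, Real.sqrt_mul (by norm_num)]
  rw [e1]
  calc Real.sqrt (3 * (3 * (m - α / (3 * β)) ^ 2 - (α ^ 2 + 3 * β * δ) / (3 * β ^ 2)))
      ≤ Real.sqrt ((6 * (α / (3 * β) - m)) ^ 2) := Real.sqrt_le_sqrt h2
    _ = 6 * (α / (3 * β) - m) := Real.sqrt_sq (by linarith)

/-- derivative of `s` within `Iio c₋`. -/
theorem MLB.S_deriv {m : ℝ} (hm : m < cMinus α β δ lam) :
    HasDerivWithinAt (sHNLS α β δ)
      (3 * (m - α / (3 * β)) / sHNLS α β δ m) (Set.Iio (cMinus α β δ lam)) m := by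
  have hp : 0 < 3 * (m - α / (3 * β)) ^ 2 - (α ^ 2 + 3 * β * δ) / (3 * β ^ 2) :=
    lt_of_le_of_lt (sq_nonneg lam) (MLB.key_facts α β δ lam hβ hlam2 hm).1
  have h1 : HasDerivAt (fun y : ℝ => 3 * (y - α / (3 * β)) ^ 2 - (α ^ 2 + 3 * β * δ) / (3 * β ^ 2))
      (6 * (m - α / (3 * β))) m := by
    have := ((((hasDerivAt_id m).sub_const (α / (3 * β))).pow 2).const_mul
      (3:ℝ)).sub_const ((α ^ 2 + 3 * β * δ) / (3 * β ^ 2))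
    refine this.congr_deriv ?_
    simp only [id_eq]
    ring
  have h2 := (Real.hasDerivAt_sqrt hp.ne').comp m h1
  have e : (1 / (2 * Real.sqrt (3 * (m - α / (3 * β)) ^ 2 - (α ^ 2 + 3 * β * δ) / (3 * β ^ 2))))
      * (6 * (m - α / (3 * β)))
      = 3 * (m - α / (3 * β)) / sHNLS α β δ m := by
    rw [sHNLS]
    have hs : Real.sqrt (3 * (m - α / (3 * β)) ^ 2 - (α ^ 2 + 3 * β * δ) / (3 * β ^ 2)) ≠ 0 :=
      (Real.sqrt_pos.mpr hp).ne'
    field_simp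
    ring
  rw [← e]
  exact h2.hasDerivWithinAt

/-- `s` is injective on `Iio c₋`. -/
theorem MLB.S_inj : Set.InjOn (sHNLS α β δ) (Set.Iio (cMinus α β δ lam)) := by
  have : StrictAntiOn (sHNLS α β δ) (Set.Iio (cMinus α β δ lam)) := by
    intro m1 h1 m2 h2 h12
    have k1 := MLB.key_facts α β δ lam hβ hlam2 h1
    have k2 := MLB.key_facts α β δ lam hβ hlam2 h2
    rw [sHNLS, sHNLS]
    apply Real.sqrt_lt_sqrt (by nlinarith [k2.1, sq_nonneg lam])
    nlinarith [k1.2.2, k2.2.2]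
  exact this.injOn

/-- Schur-weight integral bound: `A(x) ≤ (2/√3)·√π·x^{-1/2}`. -/
theorem MLB.A_bound (x : ℝ) (hx : 0 < x) :
    (∫⁻ m in Set.Iio (cMinus α β δ lam),
        ENNReal.ofReal ((sHNLS α β δ m) ^ (-(1/2):ℝ) * Real.exp (-(x * sHNLS α β δ m))))
      ≤ ENNReal.ofReal (2 / Real.sqrt 3)
          * ENNReal.ofReal (Real.sqrt Real.pi * x ^ (-(1/2):ℝ)) := by
  set g : ℝ → ℝ≥0∞ := fun t => ENNReal.ofReal (t ^ (-(1/2):ℝ) * Real.exp (-(x * t))) with hg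
  set S' : ℝ → ℝ := fun m => 3 * (m - α / (3 * β)) / sHNLS α β δ m with hS'
  have step1 : (∫⁻ m in Set.Iio (cMinus α β δ lam), g (sHNLS α β δ m))
      ≤ ENNReal.ofReal (2 / Real.sqrt 3)
        * ∫⁻ m in Set.Iio (cMinus α β δ lam), ENNReal.ofReal |S' m| * g (sHNLS α β δ m) := by
    rw [← lintegral_const_mul' _ _ ENNReal.ofReal_ne_top]
    refine lintegral_mono_ae ?_
    filter_upwards [ae_restrict_mem measurableSet_Iio] with m hm
    have hSpos := MLB.S_pos hβ hlam2 hm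
    have hle := MLB.S_le hβ hlam2 hm
    have hma : m < α / (3*β) := (MLB.key_facts α β δ lam hβ hlam2 hm).2.2
    have h3 : (0:ℝ) < Real.sqrt 3 := by positivity
    have habs : |S' m| = 3 * (α/(3*β) - m) / sHNLS α β δ m := by
      rw [hS']
      rw [abs_div, abs_of_pos hSpos, abs_of_neg (by nlinarith : 3*(m - α/(3*β)) < 0)]
      ring_nf
    have h1 : (1:ℝ) ≤ 2 / Real.sqrt 3 * |S' m| := by
      rw [habs, div_mul_div_comm, le_div_iff₀ (by positivity)]
      nlinarith
    calc g (sHNLS α β δ m) = 1 * g (sHNLS α β δ m) := (one_mul _).symm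
      _ ≤ (ENNReal.ofReal (2/Real.sqrt 3) * ENNReal.ofReal |S' m|) * g (sHNLS α β δ m) := by
          apply mul_le_mul_left
          rw [← ENNReal.ofReal_mul (by positivity), ← ENNReal.ofReal_one]
          exact ENNReal.ofReal_le_ofReal h1
      _ = ENNReal.ofReal (2/Real.sqrt 3) * (ENNReal.ofReal |S' m| * g (sHNLS α β δ m)) := by
          rw [mul_assoc]
  have step2 : (∫⁻ m in Set.Iio (cMinus α β δ lam), ENNReal.ofReal |S' m| * g (sHNLS α β δ m))
      = ∫⁻ t in sHNLS α β δ '' Set.Iio (cMinus α β δ lam), g t :=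
    (MLB.lint_cov measurableSet_Iio (fun m hm => MLB.S_deriv hβ hlam2 hm)
      (MLB.S_inj hβ hlam2) g).symm
  have step3 : (∫⁻ t in sHNLS α β δ '' Set.Iio (cMinus α β δ lam), g t)
      ≤ ∫⁻ t in Set.Ioi 0, g t := by
    apply lintegral_mono_set
    rintro t ⟨m, hm, rfl⟩
    exact MLB.S_pos hβ hlam2 hm
  have step4 : (∫⁻ t in Set.Ioi (0:ℝ), g t)
      = ENNReal.ofReal (Real.sqrt Real.pi * x ^ (-(1/2):ℝ)) := MLB.lint_gamma hx
  calc (∫⁻ m in Set.Iio (cMinus α β δ lam), g (sHNLS α β δ m))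
      ≤ ENNReal.ofReal (2 / Real.sqrt 3)
        * ∫⁻ m in Set.Iio (cMinus α β δ lam), ENNReal.ofReal |S' m| * g (sHNLS α β δ m) := step1
    _ = ENNReal.ofReal (2 / Real.sqrt 3)
        * ∫⁻ t in sHNLS α β δ '' Set.Iio (cMinus α β δ lam), g t := by rw [step2]
    _ ≤ ENNReal.ofReal (2 / Real.sqrt 3) * ∫⁻ t in Set.Ioi 0, g t := mul_le_mul_right step3 _
    _ = ENNReal.ofReal (2 / Real.sqrt 3)
        * ENNReal.ofReal (Real.sqrt Real.pi * x ^ (-(1/2):ℝ)) := by rw [step4]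

/-- inner integral over `x`. -/
theorem MLB.lint_inner {m : ℝ} (hm : m < cMinus α β δ lam) :
    (∫⁻ x in Set.Ioi (0:ℝ),
        ENNReal.ofReal (x ^ (-(1/2):ℝ) * Real.exp (-(x * sHNLS α β δ m))))
      = ENNReal.ofReal (Real.sqrt Real.pi * (sHNLS α β δ m) ^ (-(1/2):ℝ)) := by
  have h := MLB.lint_gamma (MLB.S_pos hβ hlam2 hm)
  simp_rw [mul_comm (sHNLS α β δ m)] at h
  exact h

/-- Cauchy-Schwarz step. -/
theorem MLB.CS (f : ℝ → ℂ) (hf : Measurable f) (x : ℝ) :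
    ENNReal.ofReal (‖∫ m in Set.Iio (cMinus α β δ lam),
        ((Real.exp (-(x * sHNLS α β δ m)) : ℝ) : ℂ) * f m‖ ^ 2)
      ≤ (∫⁻ m in Set.Iio (cMinus α β δ lam),
            ENNReal.ofReal ((sHNLS α β δ m) ^ (-(1/2):ℝ) * Real.exp (-(x * sHNLS α β δ m))))
        * (∫⁻ m in Set.Iio (cMinus α β δ lam),
            ENNReal.ofReal ((sHNLS α β δ m) ^ ((1/2):ℝ) * Real.exp (-(x * sHNLS α β δ m))
              * ‖f m‖ ^ 2)) := by
  have hSmeas : Measurable (sHNLS α β δ) := by unfold sHNLS; fun_prop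
  set μ := volume.restrict (Set.Iio (cMinus α β δ lam)) with hμ
  set S := sHNLS α β δ with hS
  set u : ℝ → ℝ≥0∞ := fun m =>
    ENNReal.ofReal (Real.exp (-(x * S m)/2) * (S m) ^ (-(1/4):ℝ)) with hu
  set v : ℝ → ℝ≥0∞ := fun m =>
    ENNReal.ofReal (Real.exp (-(x * S m)/2) * (S m) ^ ((1/4):ℝ) * ‖f m‖) with hv
  have humeas : Measurable u := by rw [hu]; fun_prop
  have hvmeas : Measurable v := by rw [hv]; fun_prop
  have sq2 : ∀ y : ℝ, y ^ (2:ℝ) = y * y := fun y => by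
    rw [show (2:ℝ) = ((2:ℕ):ℝ) by norm_num, Real.rpow_natCast]; ring
  have h1 : ENNReal.ofReal ‖∫ m in Set.Iio (cMinus α β δ lam),
        ((Real.exp (-(x * S m)) : ℝ) : ℂ) * f m‖
      ≤ ∫⁻ m, ↑‖((Real.exp (-(x * S m)) : ℝ) : ℂ) * f m‖₊ ∂μ := by
    rw [ofReal_norm]
    exact enorm_integral_le_lintegral_enorm _
  have h2 : (∫⁻ m, ↑‖((Real.exp (-(x * S m)) : ℝ) : ℂ) * f m‖₊ ∂μ)
      = ∫⁻ m, (u * v) m ∂μ := by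
    apply lintegral_congr_ae
    filter_upwards [ae_restrict_mem measurableSet_Iio] with m hm
    have hS0 : 0 < S m := MLB.S_pos hβ hlam2 hm
    have e2 : Real.exp (-(x*S m)/2) * Real.exp (-(x*S m)/2) = Real.exp (-(x*S m)) := by
      rw [← Real.exp_add]; ring_nf
    have r2 : (S m)^(-(1/4):ℝ) * (S m)^((1/4):ℝ) = 1 := by
      rw [← Real.rpow_add hS0]; norm_num
    rw [← enorm_eq_nnnorm, ← ofReal_norm, Pi.mul_apply, hu, hv,
      ← ENNReal.ofReal_mul (mul_nonneg (Real.exp_pos _).le (Real.rpow_nonneg hS0.le _))]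
    congr 1
    rw [norm_mul, Complex.norm_real, Real.norm_eq_abs, Real.abs_exp]
    calc Real.exp (-(x * S m)) * ‖f m‖
        = (Real.exp (-(x*S m)/2) * Real.exp (-(x*S m)/2))
          * ((S m)^(-(1/4):ℝ) * (S m)^((1/4):ℝ)) * ‖f m‖ := by rw [e2, r2]; ring
      _ = Real.exp (-(x * S m)/2) * (S m) ^ (-(1/4):ℝ)
          * (Real.exp (-(x * S m)/2) * (S m) ^ ((1/4):ℝ) * ‖f m‖) := by ring
  have h3 := ENNReal.lintegral_mul_le_Lp_mul_Lq μ
    (Real.HolderConjugate.two_two : Real.HolderConjugate 2 2)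
    humeas.aemeasurable hvmeas.aemeasurable
  have h4 : (∫⁻ m, u m ^ (2:ℝ) ∂μ)
      = ∫⁻ m in Set.Iio (cMinus α β δ lam),
          ENNReal.ofReal ((S m) ^ (-(1/2):ℝ) * Real.exp (-(x * S m))) := by
    apply lintegral_congr_ae
    filter_upwards [ae_restrict_mem measurableSet_Iio] with m hm
    have hS0 : 0 < S m := MLB.S_pos hβ hlam2 hm
    simp only [hu]
    rw [ENNReal.ofReal_rpow_of_nonneg
      (mul_nonneg (Real.exp_pos _).le (Real.rpow_nonneg hS0.le _)) (by norm_num : (0:ℝ) ≤ 2)]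
    congr 1
    rw [sq2]
    calc (Real.exp (-(x*S m)/2) * (S m) ^ (-(1/4):ℝ))
          * (Real.exp (-(x*S m)/2) * (S m) ^ (-(1/4):ℝ))
        = (Real.exp (-(x*S m)/2) * Real.exp (-(x*S m)/2))
          * ((S m)^(-(1/4):ℝ) * (S m)^(-(1/4):ℝ)) := by ring
      _ = (S m) ^ (-(1/2):ℝ) * Real.exp (-(x * S m)) := by
          rw [← Real.exp_add, ← Real.rpow_add hS0,
            show -(x*S m)/2 + -(x*S m)/2 = -(x*S m) by ring,
            show (-(1/4):ℝ) + -(1/4) = -(1/2) by norm_num]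
          ring
  have h5 : (∫⁻ m, v m ^ (2:ℝ) ∂μ)
      = ∫⁻ m in Set.Iio (cMinus α β δ lam),
          ENNReal.ofReal ((S m) ^ ((1/2):ℝ) * Real.exp (-(x * S m)) * ‖f m‖ ^ 2) := by
    apply lintegral_congr_ae
    filter_upwards [ae_restrict_mem measurableSet_Iio] with m hm
    have hS0 : 0 < S m := MLB.S_pos hβ hlam2 hm
    simp only [hv]
    rw [ENNReal.ofReal_rpow_of_nonneg
      (mul_nonneg (mul_nonneg (Real.exp_pos _).le (Real.rpow_nonneg hS0.le _)) (norm_nonneg _))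
      (by norm_num : (0:ℝ) ≤ 2)]
    congr 1
    rw [sq2]
    calc (Real.exp (-(x*S m)/2) * (S m) ^ ((1/4):ℝ) * ‖f m‖)
          * (Real.exp (-(x*S m)/2) * (S m) ^ ((1/4):ℝ) * ‖f m‖)
        = (Real.exp (-(x*S m)/2) * Real.exp (-(x*S m)/2))
          * ((S m)^((1/4):ℝ) * (S m)^((1/4):ℝ)) * (‖f m‖ * ‖f m‖) := by ring
      _ = (S m) ^ ((1/2):ℝ) * Real.exp (-(x * S m)) * ‖f m‖ ^ 2 := by
          rw [← Real.exp_add, ← Real.rpow_add hS0,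
            show -(x*S m)/2 + -(x*S m)/2 = -(x*S m) by ring,
            show ((1/4):ℝ) + (1/4) = (1/2) by norm_num]
          ring
  have hsq : ∀ A B : ℝ≥0∞, (A ^ ((1:ℝ)/2) * B ^ ((1:ℝ)/2)) ^ (2:ℕ) = A * B := by
    intro A B
    rw [mul_pow, ← ENNReal.rpow_natCast (A ^ ((1:ℝ)/2)) 2,
      ← ENNReal.rpow_natCast (B ^ ((1:ℝ)/2)) 2, ← ENNReal.rpow_mul, ← ENNReal.rpow_mul]
    norm_num
  calc ENNReal.ofReal (‖∫ m in Set.Iio (cMinus α β δ lam),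
          ((Real.exp (-(x * S m)) : ℝ) : ℂ) * f m‖ ^ 2)
      = (ENNReal.ofReal ‖∫ m in Set.Iio (cMinus α β δ lam),
          ((Real.exp (-(x * S m)) : ℝ) : ℂ) * f m‖) ^ (2:ℕ) :=
        ENNReal.ofReal_pow (norm_nonneg _) 2
    _ ≤ (∫⁻ m, (u * v) m ∂μ) ^ (2:ℕ) := by
        apply pow_le_pow_left' (h2 ▸ h1)
    _ ≤ ((∫⁻ m, u m ^ (2:ℝ) ∂μ) ^ ((1:ℝ)/2) * (∫⁻ m, v m ^ (2:ℝ) ∂μ) ^ ((1:ℝ)/2)) ^ (2:ℕ) :=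
        pow_le_pow_left' h3 2
    _ = (∫⁻ m, u m ^ (2:ℝ) ∂μ) * (∫⁻ m, v m ^ (2:ℝ) ∂μ) := hsq _ _
    _ = _ := by rw [h4, h5]

end Aux

/-- Modified Laplace transform bound, part (i):
`∫₀^∞ |∫_{−∞}^{c₋} e^{−x·s(m)} f(m) dm|² dx ≲ ∫_{−∞}^{c₋} |f(m)|² dm`. -/
theorem modified_laplace_L2_bound_i (α β δ : ℝ) (hβ : 0 < β) (lam : ℝ)
    (hlam0 : 0 ≤ lam)
    (hlam1 : 0 < α ^ 2 + 3 * β * δ → lam = 0)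
    (hlam2 : α ^ 2 + 3 * β * δ ≤ 0 →
      2 * Real.sqrt (-(α ^ 2 + 3 * β * δ)) / (3 * β) < lam) :
    ∃ C > 0, ∀ f : ℝ → ℂ, Measurable f →
      (∫⁻ m in Set.Iio (cMinus α β δ lam), ENNReal.ofReal (‖f m‖ ^ 2) < ⊤) →
      (∫⁻ x in Set.Ioi (0 : ℝ),
          ENNReal.ofReal
            (‖∫ m in Set.Iio (cMinus α β δ lam),
                ((Real.exp (-(x * sHNLS α β δ m)) : ℝ) : ℂ) * f m‖ ^ 2)) ≤
        ENNReal.ofReal C *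
          ∫⁻ m in Set.Iio (cMinus α β δ lam), ENNReal.ofReal (‖f m‖ ^ 2) := by
  have hSmeas : Measurable (sHNLS α β δ) := by unfold sHNLS; fun_prop
  refine ⟨2 / Real.sqrt 3 * Real.pi, by positivity, ?_⟩
  intro f hf _
  set c := cMinus α β δ lam with hc
  set S := sHNLS α β δ with hS
  set W : ℝ → ℝ → ENNReal := fun x m =>
    ENNReal.ofReal (x ^ (-(1/2):ℝ) * Real.exp (-(x * S m)))
      * ENNReal.ofReal ((S m) ^ ((1/2):ℝ) * ‖f m‖ ^ 2) with hW
  set K0 : ENNReal := ENNReal.ofReal (2 / Real.sqrt 3) * ENNReal.ofReal (Real.sqrt Real.pi)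
    with hK0
  have hK0top : K0 ≠ ⊤ := ENNReal.mul_ne_top ENNReal.ofReal_ne_top ENNReal.ofReal_ne_top
  have key : ∀ x ∈ Set.Ioi (0:ℝ),
      ENNReal.ofReal (‖∫ m in Set.Iio c, ((Real.exp (-(x * S m)) : ℝ) : ℂ) * f m‖ ^ 2)
        ≤ K0 * ∫⁻ m in Set.Iio c, W x m := by
    intro x hx
    have hx' : (0:ℝ) < x := hx
    refine le_trans (MLB.CS hβ hlam2 f hf x) ?_
    have hA := MLB.A_bound hβ hlam2 x hx'
    have hpush : ENNReal.ofReal (x ^ (-(1/2):ℝ))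
          * ∫⁻ m in Set.Iio c, ENNReal.ofReal ((S m)^((1/2):ℝ) * Real.exp (-(x*S m)) * ‖f m‖^2)
        = ∫⁻ m in Set.Iio c, W x m := by
      rw [← lintegral_const_mul' _ _ ENNReal.ofReal_ne_top]
      apply lintegral_congr fun m => ?_
      simp only [hW]
      rw [← ENNReal.ofReal_mul (Real.rpow_nonneg hx'.le _),
        ← ENNReal.ofReal_mul (mul_nonneg (Real.rpow_nonneg hx'.le _) (Real.exp_pos _).le)]
      congr 1
      ring
    calc (∫⁻ m in Set.Iio c, ENNReal.ofReal ((S m)^(-(1/2):ℝ) * Real.exp (-(x * S m))))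
          * (∫⁻ m in Set.Iio c,
              ENNReal.ofReal ((S m)^((1/2):ℝ) * Real.exp (-(x*S m)) * ‖f m‖^2))
        ≤ (ENNReal.ofReal (2/Real.sqrt 3) * ENNReal.ofReal (Real.sqrt Real.pi * x^(-(1/2):ℝ)))
          * (∫⁻ m in Set.Iio c,
              ENNReal.ofReal ((S m)^((1/2):ℝ) * Real.exp (-(x*S m)) * ‖f m‖^2)) :=
          mul_le_mul_left hA _
      _ = K0 * (ENNReal.ofReal (x ^ (-(1/2):ℝ))
            * ∫⁻ m in Set.Iio c,
              ENNReal.ofReal ((S m)^((1/2):ℝ) * Real.exp (-(x*S m)) * ‖f m‖^2)) := by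
          rw [ENNReal.ofReal_mul (Real.sqrt_nonneg _), hK0]
          ring
      _ = K0 * ∫⁻ m in Set.Iio c, W x m := by rw [hpush]
  have hWmeas : AEMeasurable (Function.uncurry W)
      ((volume.restrict (Set.Ioi (0:ℝ))).prod (volume.restrict (Set.Iio c))) := by
    have : Measurable fun z : ℝ × ℝ =>
        ENNReal.ofReal (z.1 ^ (-(1/2):ℝ) * Real.exp (-(z.1 * S z.2)))
          * ENNReal.ofReal ((S z.2) ^ ((1/2):ℝ) * ‖f z.2‖ ^ 2) := by
      have hS' : Measurable S := hSmeas
      fun_prop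
    exact this.aemeasurable
  calc (∫⁻ x in Set.Ioi (0:ℝ),
        ENNReal.ofReal (‖∫ m in Set.Iio c, ((Real.exp (-(x * S m)) : ℝ) : ℂ) * f m‖ ^ 2))
      ≤ ∫⁻ x in Set.Ioi (0:ℝ), K0 * ∫⁻ m in Set.Iio c, W x m := by
        refine lintegral_mono_ae ?_
        filter_upwards [ae_restrict_mem measurableSet_Ioi] with x hx
        exact key x hx
    _ = K0 * ∫⁻ x in Set.Ioi (0:ℝ), ∫⁻ m in Set.Iio c, W x m :=
        lintegral_const_mul' _ _ hK0top
    _ = K0 * ∫⁻ m in Set.Iio c, ∫⁻ x in Set.Ioi (0:ℝ), W x m := by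
        rw [lintegral_lintegral_swap hWmeas]
    _ = K0 * ∫⁻ m in Set.Iio c, ENNReal.ofReal (Real.sqrt Real.pi) * ENNReal.ofReal (‖f m‖^2)
        := by
        congr 1
        apply lintegral_congr_ae
        filter_upwards [ae_restrict_mem measurableSet_Iio] with m hm
        have hS0 : 0 < S m := MLB.S_pos hβ hlam2 hm
        have h1 : (∫⁻ x in Set.Ioi (0:ℝ), W x m)
            = (∫⁻ x in Set.Ioi (0:ℝ),
                ENNReal.ofReal (x ^ (-(1/2):ℝ) * Real.exp (-(x * S m))))
              * ENNReal.ofReal ((S m) ^ ((1/2):ℝ) * ‖f m‖ ^ 2) :=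
          lintegral_mul_const' _ _ ENNReal.ofReal_ne_top
        rw [h1, MLB.lint_inner hβ hlam2 hm,
          ← ENNReal.ofReal_mul (mul_nonneg (Real.sqrt_nonneg _) (Real.rpow_nonneg hS0.le _)),
          ← ENNReal.ofReal_mul (Real.sqrt_nonneg _)]
        congr 1
        have : (S m) ^ (-(1/2):ℝ) * (S m) ^ ((1/2):ℝ) = 1 := by
          rw [← Real.rpow_add hS0]; norm_num
        calc Real.sqrt Real.pi * (S m) ^ (-(1/2):ℝ) * ((S m) ^ ((1/2):ℝ) * ‖f m‖ ^ 2)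
            = Real.sqrt Real.pi * ((S m) ^ (-(1/2):ℝ) * (S m) ^ ((1/2):ℝ)) * ‖f m‖ ^ 2 := by
              ring
          _ = Real.sqrt Real.pi * ‖f m‖ ^ 2 := by rw [this]; ring
    _ = ENNReal.ofReal (2 / Real.sqrt 3 * Real.pi)
        * ∫⁻ m in Set.Iio c, ENNReal.ofReal (‖f m‖ ^ 2) := by
        rw [lintegral_const_mul' _ _ ENNReal.ofReal_ne_top, ← mul_assoc, hK0]
        congr 1
        rw [mul_assoc, ← ENNReal.ofReal_mul (Real.sqrt_nonneg _),
          Real.mul_self_sqrt Real.pi_nonneg,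
          ← ENNReal.ofReal_mul (by positivity)]
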